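/- Let G be an abelian group and f : G → G a group endomorphism. Write S = ⋂_{n≥1} f^n(G) for the intersection of the images of all iterates of f. Assume there exists N₀ ≥ 1 such that for every n ≥ 1, ker(f^n) ⊆ ker(f^{N₀}). Then for every x ∈ S there exists x₁ ∈ S with f(x₁) = x; that is, f restricted to S is surjective onto S. -/
import Mathlib


/-- Sublemma S:S1 (group-theoretic form): let `f` be an endomorphism of an abelian
group `G`, `S = ⋂_{n ≥ 1} f^n(G)`, and suppose all kernels of iterates of `f` are
contained in `ker (f^{N₀})` for some `N₀ ≥ 1`. Then every `x ∈ S` is the image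
under `f` of some `x₁ ∈ S`. -/
theorem exists_preimage_in_sharp {G : Type*} [AddCommGroup G] (f : G →+ G)
    (N₀ : ℕ) (hN₀ : 1 ≤ N₀)
    (hker : ∀ n, 1 ≤ n → ∀ y : G, (⇑f)^[n] y = 0 → (⇑f)^[N₀] y = 0) :
    ∀ x ∈ ⋂ n ∈ Set.Ici 1, Set.range ((⇑f)^[n]),
      ∃ x₁ ∈ ⋂ n ∈ Set.Ici 1, Set.range ((⇑f)^[n]), f x₁ = x := by
  intro x hx
  simp only [Set.mem_iInter, Set.mem_Ici, Set.mem_range] at hx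
  obtain ⟨u, hu⟩ := hx (N₀ + 1) (by omega)
  refine ⟨(⇑f)^[N₀] u, ?_, ?_⟩
  · simp only [Set.mem_iInter, Set.mem_Ici, Set.mem_range]
    intro n hn
    obtain ⟨v, hv⟩ := hx (N₀ + 1 + n) (by omega)
    refine ⟨(⇑f)^[N₀] v, ?_⟩
    have key : (⇑f)^[N₀ + 1] (u - (⇑f)^[n] v) = 0 := by
      rw [iterate_map_sub f, hu, ← Function.iterate_add_apply, hv, sub_self]
    have := hker (N₀ + 1) (by omega) _ key
    rw [iterate_map_sub f, sub_eq_zero] at this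
    rw [this, ← Function.iterate_add_apply, ← Function.iterate_add_apply, Nat.add_comm]
  · rw [← Function.iterate_succ_apply' f N₀ u]
    exact hu
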